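/- Let I ⊆ ℝ be a closed bounded interval, s a positive integer, and μ₁, …, μ_s finite absolutely continuous (atomless) Borel measures on I. Then there exists a partition of I into s consecutive intervals I₁, …, I_s (ordered left to right) and a permutation π of {1, …, s} such that μ_{π(i)}(I_i) ≥ μ_{π(i)}(I)/s for each i = 1, …, s. -/

import Mathlib

open MeasureTheory Set
open scoped ENNReal

lemma cut_single (a b : ℝ) (hab : a ≤ b) (ν : Measure ℝ) [IsFiniteMeasure ν]
    (hat : ∀ x : ℝ, ν {x} = 0) (r : ℝ≥0∞) (hr : r ≤ ν (Ioc a b)) :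
    ∃ t ∈ Icc a b, r ≤ ν (Ioc a t) ∧ ∀ u ≤ t, ν (Ioc a u) ≤ r := by
  set S : Set ℝ := {x | x ∈ Icc a b ∧ r ≤ ν (Ioc a x)} with hS
  have hbS : b ∈ S := ⟨⟨hab, le_rfl⟩, hr⟩
  have hne : S.Nonempty := ⟨b, hbS⟩
  have hbdd : BddBelow S := ⟨a, fun x hx => hx.1.1⟩
  set t := sInf S with ht
  have hta : a ≤ t := le_csInf hne fun x hx => hx.1.1
  have htb : t ≤ b := csInf_le hbdd hbS
  refine ⟨t, ⟨hta, htb⟩, ?_, ?_⟩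
  · have key : ∀ n : ℕ, r ≤ ν (Ioc a (t + 1/(n+1))) := by
      intro n
      have hpos : t < t + 1/((n:ℝ)+1) := by
        have : (0:ℝ) < 1/((n:ℝ)+1) := by positivity
        linarith
      obtain ⟨x, hxS, hxlt⟩ := exists_lt_of_csInf_lt hne hpos
      exact hxS.2.trans (measure_mono (Ioc_subset_Ioc_right hxlt.le))
    have hanti : Antitone (fun n : ℕ => Ioc a (t + 1/(n+1))) := by
      intro m n hmn
      apply Ioc_subset_Ioc_right
      have h1 : (1:ℝ)/((n:ℝ)+1) ≤ 1/((m:ℝ)+1) := by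
        apply one_div_le_one_div_of_le
        · positivity
        · exact_mod_cast by omega
      linarith
    have hset : Ioc a t = ⋂ n : ℕ, Ioc a (t + 1/(n+1)) := by
      ext y
      simp only [mem_Ioc, mem_iInter]
      constructor
      · rintro ⟨h1, h2⟩ n
        refine ⟨h1, ?_⟩
        have : (0:ℝ) < 1/((n:ℝ)+1) := by positivity
        linarith
      · intro h
        refine ⟨(h 0).1, ?_⟩
        refine le_of_forall_pos_le_add fun ε hε => ?_
        obtain ⟨n, hn⟩ := exists_nat_one_div_lt hε
        have := (h n).2
        linarith
    rw [hset, Directed.measure_iInter (fun n => measurableSet_Ioc.nullMeasurableSet)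
      hanti.directed_ge ⟨0, measure_ne_top ν _⟩]
    exact le_iInf key
  · intro u hu
    have h1 : ν (Ioc a u) ≤ ν (Ioo a u) := by
      calc ν (Ioc a u) ≤ ν (Ioo a u ∪ {u}) := by
            apply measure_mono
            intro y hy
            rcases eq_or_lt_of_le hy.2 with h | h
            · exact Or.inr h
            · exact Or.inl ⟨hy.1, h⟩
        _ ≤ ν (Ioo a u) + ν {u} := measure_union_le _ _
        _ = ν (Ioo a u) := by rw [hat u, add_zero]
    refine h1.trans ?_
    have hmono : Monotone (fun n : ℕ => Ioc a (u - 1/(n+1))) := by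
      intro m n hmn
      apply Ioc_subset_Ioc_right
      have h1 : (1:ℝ)/((n:ℝ)+1) ≤ 1/((m:ℝ)+1) := by
        apply one_div_le_one_div_of_le
        · positivity
        · exact_mod_cast by omega
      linarith
    have hsub : Ioo a u = ⋃ n : ℕ, Ioc a (u - 1/(n+1)) := by
      ext y
      simp only [mem_Ioo, mem_Ioc, mem_iUnion]
      constructor
      · rintro ⟨h1, h2⟩
        obtain ⟨n, hn⟩ := exists_nat_one_div_lt (by linarith : (0:ℝ) < u - y)
        exact ⟨n, h1, by linarith⟩
      · rintro ⟨n, h1, h2⟩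
        have : (0:ℝ) < 1/((n:ℝ)+1) := by positivity
        exact ⟨h1, by linarith⟩
    rw [hsub, Directed.measure_iUnion hmono.directed_le]
    refine iSup_le fun n => ?_
    set x := u - 1/((n:ℝ)+1) with hx
    by_cases hxa : x ≤ a
    · rw [Ioc_eq_empty (by exact fun h => absurd hxa (not_le.mpr h))]
      simp
    · push_neg at hxa
      have hxu : x < u := by
        have : (0:ℝ) < 1/((n:ℝ)+1) := by positivity
        simp only [hx]; linarith
      have hxt : x < t := lt_of_lt_of_le hxu hu
      have hxnot : x ∉ S := fun hmem => absurd (csInf_le hbdd hmem) (not_le.mpr hxt)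
      by_contra hcon
      push_neg at hcon
      exact hxnot ⟨⟨hxa.le, le_trans hxt.le htb⟩, hcon.le⟩

lemma cut_multi (a b : ℝ) (hab : a ≤ b) (n : ℕ) (μ : Fin (n+1) → Measure ℝ)
    (hfin : ∀ i, IsFiniteMeasure (μ i)) (hat : ∀ i (x : ℝ), μ i {x} = 0)
    (d : ℝ≥0∞) (hd : 1 ≤ d) :
    ∃ t ∈ Icc a b, ∃ i₀ : Fin (n+1),
      μ i₀ (Ioc a b) / d ≤ μ i₀ (Ioc a t) ∧
      ∀ j, μ j (Ioc a t) ≤ μ j (Ioc a b) / d := by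
  have key : ∀ i : Fin (n+1), ∃ t ∈ Icc a b,
      μ i (Ioc a b) / d ≤ μ i (Ioc a t) ∧ ∀ u ≤ t, μ i (Ioc a u) ≤ μ i (Ioc a b) / d := by
    intro i
    have := hfin i
    refine cut_single a b hab (μ i) (hat i) _ (ENNReal.div_le_of_le_mul ?_)
    exact le_mul_of_one_le_right zero_le hd
  choose t ht hge hle using key
  obtain ⟨i₀, -, hmin⟩ := Finset.exists_min_image Finset.univ t ⟨0, Finset.mem_univ 0⟩
  refine ⟨t i₀, ht i₀, i₀, hge i₀, fun j => hle j (t i₀) (hmin j (Finset.mem_univ j))⟩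

lemma ennreal_step {A B : ℝ≥0∞} (n : ℕ) (hA : A ≤ (A + B) / ((n:ℝ≥0∞)+2)) (hfin : A + B ≠ ⊤) :
    (A + B) / ((n:ℝ≥0∞)+2) ≤ B / ((n:ℝ≥0∞)+1) := by
  have hAne : A ≠ ⊤ := fun h => hfin (by simp [h])
  have h2ne : ((n:ℝ≥0∞)+2) ≠ 0 := by simp [add_eq_zero]
  have h2t : ((n:ℝ≥0∞)+2) ≠ ⊤ := by
    simp [ENNReal.add_ne_top]
  have h1ne : ((n:ℝ≥0∞)+1) ≠ 0 := by simp [add_eq_zero]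
  have h1t : ((n:ℝ≥0∞)+1) ≠ ⊤ := by simp [ENNReal.add_ne_top]
  have hmul : A * ((n:ℝ≥0∞)+2) ≤ A + B := (ENNReal.le_div_iff_mul_le (Or.inl h2ne) (Or.inl h2t)).mp hA
  have hAB : A * ((n:ℝ≥0∞)+1) ≤ B := by
    have : A * ((n:ℝ≥0∞)+1) + A ≤ B + A := by
      calc A * ((n:ℝ≥0∞)+1) + A = A * ((n:ℝ≥0∞)+2) := by ring
        _ ≤ A + B := hmul
        _ = B + A := by ring
    exact ENNReal.add_le_add_iff_right hAne |>.mp this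
  have hAle : A ≤ B / ((n:ℝ≥0∞)+1) := (ENNReal.le_div_iff_mul_le (Or.inl h1ne) (Or.inl h1t)).mpr hAB
  rw [ENNReal.div_le_iff h2ne h2t]
  calc A + B ≤ B / ((n:ℝ≥0∞)+1) + B := by exact add_le_add_left hAle B
    _ = B / ((n:ℝ≥0∞)+1) + B / ((n:ℝ≥0∞)+1) * ((n:ℝ≥0∞)+1) := by
        rw [ENNReal.div_mul_cancel h1ne h1t]
    _ = B / ((n:ℝ≥0∞)+1) * ((n:ℝ≥0∞)+2) := by ring

lemma cake_aux (n : ℕ) : ∀ (a b : ℝ), a ≤ b → ∀ (μ : Fin (n+1) → Measure ℝ),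
    (∀ i, IsFiniteMeasure (μ i)) → (∀ i (x : ℝ), μ i {x} = 0) →
    ∃ c : Fin (n + 2) → ℝ, Monotone c ∧ c 0 = a ∧ c (Fin.last (n+1)) = b ∧
      ∃ π : Equiv.Perm (Fin (n+1)), ∀ i : Fin (n+1),
        μ (π i) (Ioc a b) / ((n:ℝ≥0∞)+1) ≤ μ (π i) (Ioc (c i.castSucc) (c i.succ)) := by
  induction n with
  | zero =>
    intro a b hab μ hfin hat
    refine ⟨![a, b], ?_, rfl, rfl, 1, ?_⟩
    · intro i j hij
      fin_cases i <;> fin_cases j <;> simp_all <;> omega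
    · intro i
      fin_cases i
      simp [ENNReal.div_le_iff]
  | succ m ih =>
    intro a b hab μ hfin hat
    obtain ⟨t, ⟨hta, htb⟩, i₀, hge, hle⟩ :=
      cut_multi a b hab (m+1) μ hfin hat ((m:ℝ≥0∞)+2) (by
        calc (1:ℝ≥0∞) ≤ 2 := one_le_two
          _ ≤ (m:ℝ≥0∞)+2 := le_add_self)
    set μ' : Fin (m+1) → Measure ℝ := fun j => μ (i₀.succAbove j) with hμ'
    obtain ⟨c', hc'mono, hc'0, hc'last, π', hπ'⟩ :=
      ih t b htb μ' (fun j => hfin _) (fun j x => hat _ x)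
    set c : Fin (m+3) → ℝ := Fin.cons a c' with hc
    set π : Equiv.Perm (Fin (m+2)) :=
      (finSuccEquiv (m+1)).trans ((Equiv.optionCongr π').trans (finSuccEquiv' i₀).symm) with hπ
    have hπ0 : π 0 = i₀ := by simp [hπ]
    have hπs : ∀ j : Fin (m+1), π j.succ = i₀.succAbove (π' j) := by
      intro j; simp [hπ]
    refine ⟨c, ?_, ?_, ?_, π, ?_⟩
    · rw [Fin.monotone_iff_le_succ]
      intro i
      induction i using Fin.cases with
      | zero =>
        simpa [hc, Fin.succ_zero_eq_one'] using hc'0 ▸ hta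
      | succ j =>
        have h1 : c (j.succ.castSucc) = c' j.castSucc := by
          rw [← Fin.succ_castSucc]; simp [hc]
        have h2 : c (j.succ.succ) = c' j.succ := by simp [hc]
        rw [h1, h2]
        exact hc'mono (Fin.castSucc_le_succ j)
    · simp [hc]
    · have hl : Fin.last (m+1+1) = (Fin.last (m+1)).succ := (Fin.succ_last _).symm
      rw [hc, hl, Fin.cons_succ, hc'last]
    · intro i
      induction i using Fin.cases with
      | zero =>
        rw [hπ0]
        have h1 : c ((0:Fin (m+2)).castSucc) = a := by simp [hc]
        have h2 : c ((0:Fin (m+2)).succ) = t := by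
          rw [Fin.succ_zero_eq_one']
          simpa [hc] using hc'0
        rw [h1, h2]
        have : ((m:ℝ≥0∞)+1)+1 = (m:ℝ≥0∞)+2 := by ring
        push_cast
        rw [this]
        exact hge
      | succ j =>
        rw [hπs j]
        have h1 : c (j.succ.castSucc) = c' j.castSucc := by
          rw [← Fin.succ_castSucc]; simp [hc]
        have h2 : c (j.succ.succ) = c' j.succ := by simp [hc]
        rw [h1, h2]
        set e := i₀.succAbove (π' j) with he
        have hAB : μ e (Ioc a t) + μ e (Ioc t b) = μ e (Ioc a b) := by
          rw [← measure_union (Set.Ioc_disjoint_Ioc_of_le le_rfl) measurableSet_Ioc,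
            Set.Ioc_union_Ioc_eq_Ioc hta htb]
        have hfe := hfin e
        have step : μ e (Ioc a b) / ((m:ℝ≥0∞)+2) ≤ μ e (Ioc t b) / ((m:ℝ≥0∞)+1) := by
          rw [← hAB]
          exact ennreal_step m (by rw [hAB]; exact hle e) (by rw [hAB]; exact measure_ne_top _ _)
        have final := step.trans (hπ' j)
        have : ((m:ℝ≥0∞)+1)+1 = (m:ℝ≥0∞)+2 := by ring
        push_cast
        rw [this]
        exact final



/-- Cake-cutting lemma: for finite atomless measures `μ₁, …, μ_s` on an interval `[a, b]`,
there is a partition of `[a, b]` into `s` consecutive intervals and a permutation `π` such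
that `μ_{π(i)}` gives the `i`-th interval at least a `1/s` fraction of its total mass. -/
theorem cake_cutting (a b : ℝ) (hab : a ≤ b) (s : ℕ) (hs : 0 < s)
    (μ : Fin s → MeasureTheory.Measure ℝ)
    (hfin : ∀ i, MeasureTheory.IsFiniteMeasure (μ i))
    (hatomless : ∀ i (x : ℝ), μ i {x} = 0)
    (hsupp : ∀ i, μ i (Set.Icc a b)ᶜ = 0) :
    ∃ c : Fin (s + 1) → ℝ, Monotone c ∧ c 0 = a ∧ c (Fin.last s) = b ∧
      ∃ π : Equiv.Perm (Fin s), ∀ i : Fin s,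
        μ (π i) (Set.Icc a b) / (s : ENNReal) ≤ μ (π i) (Set.Ioc (c i.castSucc) (c i.succ)) := by
  obtain ⟨n, rfl⟩ : ∃ n, s = n + 1 := ⟨s - 1, by omega⟩
  obtain ⟨c, hmono, h0, hlast, π, hπ⟩ := cake_aux n a b hab μ hfin hatomless
  refine ⟨c, hmono, h0, hlast, π, fun i => ?_⟩
  have hIcc : μ (π i) (Set.Icc a b) = μ (π i) (Set.Ioc a b) := by
    have hle : μ (π i) (Set.Icc a b) ≤ μ (π i) (Set.Ioc a b) := by
      calc μ (π i) (Set.Icc a b) ≤ μ (π i) (Set.Ioc a b ∪ {a}) := by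
            apply measure_mono
            intro y hy
            rcases eq_or_lt_of_le hy.1 with h | h
            · exact Or.inr h.symm
            · exact Or.inl ⟨h, hy.2⟩
        _ ≤ μ (π i) (Set.Ioc a b) + μ (π i) {a} := measure_union_le _ _
        _ = μ (π i) (Set.Ioc a b) := by rw [hatomless (π i) a, add_zero]
    exact le_antisymm hle (measure_mono Set.Ioc_subset_Icc_self)
  rw [hIcc]
  have hcast : ((n + 1 : ℕ) : ℝ≥0∞) = (n : ℝ≥0∞) + 1 := by push_cast; ring
  rw [hcast]
  exact hπ i
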